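/- In the carry-less ring of nonnegative integers with XOR as addition and carry-less multiplication ⋆, the integer p = 2^{64} + 2^4 + 2^3 + 2 + 1 satisfies: for all nonzero w with degree(w) ≤ 3, the value (w ⋆ 2^{64}) mod p equals w ⋆ 27, and hence has degree at most 7 (fits in 8 bits). -/

import Mathlib

/-- Carry-less multiplication: `(a ⋆ b)ᵢ = ⨁ₖ a_{i-k} bₖ`. -/
def clmul : ℕ → ℕ → ℕ
  | 0, _ => 0
  | a + 1, b => (if (a + 1) % 2 = 1 then b else 0) ^^^ 2 * clmul ((a + 1) / 2) b
termination_by a _ => a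
decreasing_by simp_wf; omega

lemma clmul_eq (n b : ℕ) :
    clmul n b = if n = 0 then 0 else (if n % 2 = 1 then b else 0) ^^^ 2 * clmul (n / 2) b := by
  cases n with
  | zero => simp [clmul]
  | succ a => rw [clmul]; simp

lemma clmul_even (a b : ℕ) (h : a % 2 = 0) (ha : a ≠ 0) : clmul a b = 2 * clmul (a / 2) b := by
  rw [clmul_eq, if_neg ha, if_neg (by omega), Nat.zero_xor]

lemma clmul_odd (a b : ℕ) (h : a % 2 = 1) : clmul a b = b ^^^ 2 * clmul (a / 2) b := by
  rw [clmul_eq, if_neg (by omega), if_pos h]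

/-- Fuel-based evaluator for `clmul`, structurally recursive so `decide` can use it. -/
def clmulF : ℕ → ℕ → ℕ → ℕ
  | 0, _, _ => 0
  | f + 1, a, b => if a = 0 then 0 else (if a % 2 = 1 then b else 0) ^^^ 2 * clmulF f (a / 2) b

lemma clmul_eq_F : ∀ f a b : ℕ, a ≤ f → clmul a b = clmulF f a b := by
  intro f
  induction f with
  | zero => intro a b h; interval_cases a; simp [clmul, clmulF]
  | succ f ih =>
    intro a b h
    rw [clmul_eq, clmulF]
    rcases eq_or_ne a 0 with rfl | ha
    · simp
    · rw [if_neg ha, if_neg ha, ih (a / 2) b (by omega)]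

lemma xor_le_add (a b : ℕ) : a ^^^ b ≤ a + b := by
  induction a using Nat.strong_induction_on generalizing b with
  | _ a ih =>
    rcases Nat.eq_zero_or_pos a with rfl | ha
    · simp
    have h1 : (a ^^^ b) = 2 * ((a ^^^ b) / 2) + (a ^^^ b) % 2 := (Nat.div_add_mod _ 2).symm
    rw [Nat.xor_div_two, Nat.xor_mod_two_eq] at h1
    have h2 : a / 2 ^^^ b / 2 ≤ a / 2 + b / 2 := ih (a / 2) (by omega) (b / 2)
    omega

lemma mul_pow_xor (x y n : ℕ) (h : y < 2 ^ n) : 2 ^ n * x ^^^ y = 2 ^ n * x + y := by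
  apply Nat.eq_of_testBit_eq
  intro j
  have h0 : 2 ^ n * x = 2 ^ n * x + 0 := rfl
  rw [Nat.testBit_two_pow_mul_add x h j, Nat.testBit_xor, h0,
    Nat.testBit_two_pow_mul_add x (Nat.two_pow_pos n) j]
  by_cases hj : j < n
  · simp [hj]
  · simp only [hj, if_false]
    have : y < 2 ^ j := lt_of_lt_of_le h (Nat.pow_le_pow_right (by norm_num) (by omega))
    simp [Nat.testBit_lt_two_pow this]

lemma two_mul_xor (x y : ℕ) : 2 * (x ^^^ y) = 2 * x ^^^ 2 * y := by
  have h1 : (2 * x ^^^ 2 * y) = 2 * ((2 * x ^^^ 2 * y) / 2) + (2 * x ^^^ 2 * y) % 2 :=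
    (Nat.div_add_mod _ 2).symm
  rw [Nat.xor_div_two, Nat.xor_mod_two_eq] at h1
  simp only [Nat.mul_div_cancel_left _ (by norm_num : (0:ℕ) < 2)] at h1
  omega

lemma xor_left_comm (a b c : ℕ) : a ^^^ (b ^^^ c) = b ^^^ (a ^^^ c) := by
  rw [← Nat.xor_assoc, Nat.xor_comm a b, Nat.xor_assoc]

lemma clmul_two_pow (a k : ℕ) : clmul a (2 ^ k) = a * 2 ^ k := by
  induction a using Nat.strong_induction_on with
  | _ a ih =>
    rcases Nat.eq_zero_or_pos a with rfl | ha
    · simp [clmul]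
    rcases Nat.mod_two_eq_zero_or_one a with h | h
    · rw [clmul_even a _ h (by omega), ih (a / 2) (by omega)]
      have h2 : 2 * (a / 2) = a := by omega
      calc 2 * (a / 2 * 2 ^ k) = 2 * (a / 2) * 2 ^ k := by ring
        _ = a * 2 ^ k := by rw [h2]
    · rw [clmul_odd a _ h, ih (a / 2) (by omega)]
      have h2 : 2 * (a / 2 * 2 ^ k) = 2 ^ (k + 1) * (a / 2) := by ring
      rw [h2, Nat.xor_comm, mul_pow_xor _ _ _
        (Nat.pow_lt_pow_right (by norm_num) (by omega))]
      have h3 : a = 2 * (a / 2) + 1 := by omega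
      calc 2 ^ (k + 1) * (a / 2) + 2 ^ k = (2 * (a / 2) + 1) * 2 ^ k := by ring
        _ = a * 2 ^ k := by rw [← h3]

lemma clmul_xor_right (a b c : ℕ) : clmul a (b ^^^ c) = clmul a b ^^^ clmul a c := by
  induction a using Nat.strong_induction_on with
  | _ a ih =>
    rcases Nat.eq_zero_or_pos a with rfl | ha
    · simp [clmul]
    rcases Nat.mod_two_eq_zero_or_one a with h | h
    · rw [clmul_even a (b ^^^ c) h (by omega), clmul_even a b h (by omega),
        clmul_even a c h (by omega), ih (a / 2) (by omega), two_mul_xor]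
    · rw [clmul_odd a (b ^^^ c) h, clmul_odd a b h, clmul_odd a c h,
        ih (a / 2) (by omega), two_mul_xor, Nat.xor_assoc b c,
        xor_left_comm c, ← Nat.xor_assoc]

lemma clmul_le (a b : ℕ) : clmul a b ≤ a * b := by
  induction a using Nat.strong_induction_on with
  | _ a ih =>
    rcases Nat.eq_zero_or_pos a with rfl | ha
    · simp [clmul]
    have h2 := ih (a / 2) (by omega)
    have h3 : 2 * (a / 2) + a % 2 = a := Nat.div_add_mod a 2
    rcases Nat.mod_two_eq_zero_or_one a with h | h
    · rw [clmul_even a b h (by omega)]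
      nlinarith
    · rw [clmul_odd a b h]
      refine le_trans (xor_le_add _ _) ?_
      nlinarith

lemma log2_le7 (m : ℕ) (h0 : m ≠ 0) (h : m < 256) : Nat.log2 m ≤ 7 := by
  have h8 : m < 2 ^ 8 := by norm_num; omega
  exact Nat.lt_succ_iff.mp ((Nat.log2_lt h0).2 h8)

/-- For p = 2^64 ⊕ 27 and nonzero w of degree ≤ 3 (w < 16),
(w ⋆ 2^64) mod p = w ⋆ 27, which has degree at most 7. -/
theorem stmt19 (cldiv clmod : ℕ → ℕ → ℕ)
    (hchar : ∀ a b : ℕ, b ≠ 0 →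
      a = clmul (cldiv a b) b ^^^ clmod a b ∧ clmod a b < 2 ^ Nat.log2 b) :
    ∀ w : ℕ, w ≠ 0 → w < 16 →
      clmod (clmul w (2 ^ 64)) (2 ^ 64 ^^^ 27) = clmul w 27 ∧
      Nat.log2 (clmul w 27) ≤ 7 := by
  intro w hw hw16
  have hp : (2:ℕ) ^ 64 ^^^ 27 = 2 ^ 64 + 27 := by
    have := mul_pow_xor 1 27 64 (by norm_num)
    simpa using this
  have hpne : (2:ℕ) ^ 64 ^^^ 27 ≠ 0 := by rw [hp]; positivity
  obtain ⟨heq, hr⟩ := hchar (clmul w (2 ^ 64)) _ hpne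
  set q := cldiv (clmul w (2 ^ 64)) (2 ^ 64 ^^^ 27) with hqdef
  set r := clmod (clmul w (2 ^ 64)) (2 ^ 64 ^^^ 27) with hrdef
  have hlog : Nat.log2 (2 ^ 64 ^^^ 27) ≤ 64 := by
    have := (Nat.log2_lt hpne).2 (show (2:ℕ) ^ 64 ^^^ 27 < 2 ^ 65 by rw [hp]; norm_num)
    omega
  have hr64 : r < 2 ^ 64 := by
    have hmono : (2:ℕ) ^ Nat.log2 (2 ^ 64 ^^^ 27) ≤ 2 ^ 64 := Nat.pow_le_pow_right (by norm_num) hlog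
    omega
  rw [clmul_two_pow, clmul_xor_right] at heq
  rw [clmul_two_pow] at heq
  rw [Nat.xor_assoc] at heq
  -- heq : w * 2 ^ 64 = q * 2 ^ 64 ^^^ (clmul q 27 ^^^ r)
  have hc27 : clmul q 27 ≤ q * 27 := clmul_le q 27
  have h1 : q * 2 ^ 64 = w * 2 ^ 64 ^^^ (clmul q 27 ^^^ r) := by
    rw [heq]
    exact (xor_cancel_right _ _).symm
  have hqb : q * 2 ^ 64 ≤ w * 2 ^ 64 + (q * 27 + r) := by
    calc q * 2 ^ 64 ≤ w * 2 ^ 64 + (clmul q 27 ^^^ r) := by rw [h1]; exact xor_le_add _ _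
      _ ≤ w * 2 ^ 64 + (clmul q 27 + r) := by have := xor_le_add (clmul q 27) r; omega
      _ ≤ w * 2 ^ 64 + (q * 27 + r) := by omega
  have h264 : (2:ℕ) ^ 64 = 18446744073709551616 := by norm_num
  have hq16 : q ≤ 16 := by
    rw [h264] at hqb hr64
    omega
  have ht : clmul q 27 ^^^ r < 2 ^ 64 :=
    Nat.xor_lt_two_pow (by
      have h5 : clmul q 27 ≤ 16 * 27 := le_trans hc27 (by nlinarith)
      rw [h264]; omega) hr64
  have heq2 : w * 2 ^ 64 = 2 ^ 64 * q + (clmul q 27 ^^^ r) := by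
    rw [heq, mul_comm q (2 ^ 64), mul_pow_xor _ _ _ ht]
  have hkey : q = w ∧ clmul q 27 ^^^ r = 0 := by
    rw [h264] at heq2 ht
    constructor <;> omega
  obtain ⟨hqw, hz⟩ := hkey
  have hrval : r = clmul w 27 := by
    have h6 := xor_eq_zero_iff.mp hz
    rw [← hqw, ← h6]
  refine ⟨hrval, ?_⟩
  have hw1 : 1 ≤ w := by omega
  clear hrval heq h1 hqb hq16 ht heq2 hqw hz hr hr64 hc27
  interval_cases w <;>
    exact log2_le7 _ (by rw [clmul_eq_F 16 _ _ (by norm_num)]; decide)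
      (by rw [clmul_eq_F 16 _ _ (by norm_num)]; decide)
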